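/- For every disk-polygon D, the minimal width of D plus the diameter of its dual equals 2, and the minimal width of the dual plus the diameter of D equals 2: w(D) + diam(D*) = 2 and w(D*) + diam(D) = 2. -/

import Mathlib

open Metric Real MeasureTheory
open scoped InnerProductSpace Pointwise ENNReal

noncomputable section

/-- The Euclidean plane. -/
abbrev E2 := EuclideanSpace ℝ (Fin 2)

/-- The point of the Euclidean plane with the given coordinates. -/
def pt (a b : ℝ) : E2 := (EuclideanSpace.equiv (Fin 2) ℝ).symm ![a, b]

/-- The width of a set `C` in the direction of the unit vector `u`. -/
def dirWidth (C : Set E2) (u : E2) : ℝ :=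
  sSup {w : ℝ | ∃ x ∈ C, ∃ y ∈ C, w = ⟪x - y, u⟫_ℝ}

/-- The minimal width of a set: the infimum of the directional widths over all
unit vectors. -/
def minWidth (C : Set E2) : ℝ :=
  sInf {w : ℝ | ∃ u : E2, ‖u‖ = 1 ∧ w = dirWidth C u}

/-- The inradius of a set. -/
def inradius (C : Set E2) : ℝ :=
  sSup {r : ℝ | 0 ≤ r ∧ ∃ c : E2, closedBall c r ⊆ C}

/-- The circumradius of a set. -/
def circumradius (C : Set E2) : ℝ :=
  sInf {r : ℝ | 0 ≤ r ∧ ∃ c : E2, C ⊆ closedBall c r}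

/-- The dual disk-polygon of a set `D`. -/
def dualDP (D : Set E2) : Set E2 := {y : E2 | ∀ x ∈ D, dist x y ≤ 1}

open Filter
open scoped Topology

lemma inner2 (x y : E2) : ⟪x, y⟫_ℝ = x 0 * y 0 + x 1 * y 1 := by
  simp [PiLp.inner_apply, Fin.sum_univ_two, RCLike.inner_apply]
  ring

lemma norm2 (x : E2) : ‖x‖^2 = x 0^2 + x 1^2 := by
  rw [← real_inner_self_eq_norm_sq, inner2]; ring

lemma pt0 (a b : ℝ) : (pt a b) 0 = a := rfl
lemma pt1 (a b : ℝ) : (pt a b) 1 = b := rfl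

lemma dist_ball_iff {x v z : E2} (hv : ‖v‖ = 1) :
    dist z (x + v) ≤ 1 ↔ ‖z - x‖^2 ≤ 2 * ⟪z - x, v⟫_ℝ := by
  rw [dist_eq_norm]
  have h : z - (x + v) = (z - x) - v := by abel
  rw [h]
  have hexp := norm_sub_sq_real (z - x) v
  constructor
  · intro h1; nlinarith [norm_nonneg ((z-x) - v), hv]
  · intro h1; nlinarith [norm_nonneg ((z-x) - v), hv]

lemma perp_norm {e : E2} (hee : ‖e‖ = 1) : ‖pt (-(e 1)) (e 0)‖ = 1 := by
  have h1 : ‖pt (-(e 1)) (e 0)‖^2 = 1 := by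
    rw [norm2, pt0, pt1]
    have h := norm2 e
    rw [hee] at h
    linear_combination -h
  rw [← Real.sqrt_sq (norm_nonneg _), h1, Real.sqrt_one]

lemma perp_inner (e : E2) : ⟪e, pt (-(e 1)) (e 0)⟫_ℝ = 0 := by
  rw [inner2, pt0, pt1]; ring

lemma perp_complete {e u : E2} (hee : ‖e‖ = 1) (hu : ‖u‖ = 1) :
    ⟪e, u⟫_ℝ^2 + ⟪pt (-(e 1)) (e 0), u⟫_ℝ^2 = 1 := by
  rw [inner2, inner2, pt0, pt1]
  have h1 := norm2 e
  have h2 := norm2 u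
  rw [hee] at h1
  rw [hu] at h2
  nlinarith [h1, h2]

lemma norm_one_of_sq {v : E2} (h : ‖v‖^2 = 1) : ‖v‖ = 1 := by
  rw [← Real.sqrt_sq (norm_nonneg _), h, Real.sqrt_one]

set_option maxHeartbeats 1000000 in
lemma final_algebra {d s α β : ℝ} (hd0 : 0 < d) (hd2 : d < 2)
    (hs2 : s^2 = 1 - d^2/4) (hs : 0 < s) (hαβ : α^2 + β^2 = 1)
    (st₁ : -((d/2)*α + s*β) * -(d^2/4 - s^2) ≤ (d/2)*α - s*β)
    (st₂ : -((d/2)*α - s*β) * -(d^2/4 - s^2) ≤ (d/2)*α + s*β) :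
    d/2 ≤ α := by
  have e₁ : -((d/2)*α + s*β) * -(d^2/4 - s^2)
      = ((d/2)*α - s*β) - (d/2)*((2-d^2/2)*α - d*s*β) := by
    linear_combination (-((d/2)*α + s*β)) * hs2
  have e₂ : -((d/2)*α - s*β) * -(d^2/4 - s^2)
      = ((d/2)*α + s*β) - (d/2)*((2-d^2/2)*α + d*s*β) := by
    linear_combination (-((d/2)*α - s*β)) * hs2
  have h₁ : 0 ≤ (2-d^2/2)*α - d*s*β := by nlinarith [st₁, e₁, hd0]
  have h₂ : 0 ≤ (2-d^2/2)*α + d*s*β := by nlinarith [st₂, e₂, hd0]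
  have hM : (0:ℝ) < 2 - d^2/2 := by nlinarith
  have hα0 : 0 ≤ α := by nlinarith
  have hsq : (2-d^2/2)^2*α^2 - d^2*s^2*β^2 ≥ 0 := by
    have := mul_nonneg h₁ h₂
    nlinarith [this]
  have hβ2 : β^2 = 1 - α^2 := by linarith
  have h4d : (0:ℝ) < 4 - d^2 := by nlinarith
  have e3 : (4-d^2)*((4-d^2)*α^2 - d^2*(1-α^2)) = 4*((2-d^2/2)^2*α^2 - d^2*s^2*β^2) := by
    linear_combination (4*d^2*(1-α^2))*hs2 + (4*d^2*s^2)*hβ2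
  have key0 : (4-d^2)*((4-d^2)*α^2 - d^2*(1-α^2)) ≥ 0 := by rw [e3]; linarith
  have h4 : (4-d^2)*α^2 - d^2*(1-α^2) ≥ 0 := by
    by_contra hcon
    push_neg at hcon
    have hneg : (4-d^2)*((4-d^2)*α^2 - d^2*(1-α^2)) < 0 := mul_neg_of_pos_of_neg h4d hcon
    linarith
  have h5 : 4*α^2 ≥ d^2 := by nlinarith [h4]
  nlinarith [h5, hα0, hd0, sq_nonneg (2*α - d), sq_nonneg (2*α + d)]

lemma inner_comb {e n : E2} (hee : ‖e‖ = 1) (hnn : ‖n‖ = 1) (hen : ⟪e, n⟫_ℝ = 0)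
    (a b a' b' : ℝ) :
    ⟪a • e + b • n, a' • e + b' • n⟫_ℝ = a * a' + b * b' := by
  have h1 : ⟪e, e⟫_ℝ = 1 := by rw [real_inner_self_eq_norm_sq, hee]; norm_num
  have h2 : ⟪n, n⟫_ℝ = 1 := by rw [real_inner_self_eq_norm_sq, hnn]; norm_num
  have h3 : ⟪n, e⟫_ℝ = 0 := by rw [real_inner_comm]; exact hen
  rw [inner_add_left, inner_add_right, inner_add_right, real_inner_smul_left,
    real_inner_smul_left, real_inner_smul_left, real_inner_smul_left,
    real_inner_smul_right, real_inner_smul_right, real_inner_smul_right,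
    real_inner_smul_right, h1, h2, hen, h3]
  ring

lemma aux_pos {d : ℝ} (h0 : 0 < d) (h2 : d < 2) : 0 < 1 - d^2/4 := by nlinarith

lemma half_le {d a : ℝ} (hd : 0 < d) (h : d/2 ≤ a) : d^2 ≤ 2*(d*a) := by nlinarith


/-- Key convexity lemma: if `w` is a unit nonneg combination of two unit vectors
`x - c`, `z - c`, then any point within distance 1 of both `x` and `z` is within
distance 1 of `c + w`. -/
lemma lemL {c x z c' w : E2} {a b : ℝ} (ha : 0 ≤ a) (hb : 0 ≤ b)
    (hw : w = a • (x - c) + b • (z - c)) (h1 : ‖x - c‖ = 1) (h2 : ‖z - c‖ = 1)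
    (hwn : ‖w‖ = 1) (hx : dist c' x ≤ 1) (hz : dist c' z ≤ 1) :
    dist c' (c + w) ≤ 1 := by
  set p := c' - c with hp
  have hab : 1 ≤ a + b := by
    calc (1:ℝ) = ‖w‖ := hwn.symm
    _ ≤ a * ‖x - c‖ + b * ‖z - c‖ := by
        rw [hw]
        refine (norm_add_le _ _).trans ?_
        rw [norm_smul, norm_smul, Real.norm_eq_abs, Real.norm_eq_abs, abs_of_nonneg ha,
          abs_of_nonneg hb]
    _ = a + b := by rw [h1, h2]; ring
  have key : ∀ v : E2, ‖v‖ = 1 → (dist c' (c + v) ≤ 1 ↔ ‖p‖^2 ≤ 2 * ⟪p, v⟫_ℝ) := by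
    intro v
    intro hv
    rw [dist_eq_norm]
    have : c' - (c + v) = p - v := by rw [hp]; abel
    rw [this]
    constructor
    · intro h
      have := norm_sub_sq_real p v
      nlinarith [norm_nonneg (p - v), hv]
    · intro h
      have := norm_sub_sq_real p v
      nlinarith [norm_nonneg (p - v), hv]
  have hx' : ‖p‖^2 ≤ 2 * ⟪p, x - c⟫_ℝ := by
    have := key (x - c) h1
    rw [add_sub_cancel] at this
    exact this.mp hx
  have hz' : ‖p‖^2 ≤ 2 * ⟪p, z - c⟫_ℝ := by
    have := key (z - c) h2
    rw [add_sub_cancel] at this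
    exact this.mp hz
  rw [key w hwn]
  rw [hw, inner_add_right, real_inner_smul_right, real_inner_smul_right]
  nlinarith [sq_nonneg (‖p‖)]

/-- If `x₀` minimizes `⟪·, u⟫` on the disk-polygon `D` and `c` is a unit circle
center through `x₀` and `z ∈ D`, then `⟪x₀-c,u⟫⟪x₀-c,z-c⟫ ≤ ⟪z-c,u⟫`. -/
lemma circle_step {S : Finset E2} {D : Set E2} (hD : D = ⋂ c ∈ S, closedBall c 1)
    {u x₀ z c : E2} (hx₀ : x₀ ∈ D) (hmin : ∀ y ∈ D, ⟪x₀, u⟫_ℝ ≤ ⟪y, u⟫_ℝ)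
    (hz : z ∈ D) (h1 : ‖x₀ - c‖ = 1) (h2 : ‖z - c‖ = 1) :
    ⟪x₀ - c, u⟫_ℝ * ⟪x₀ - c, z - c⟫_ℝ ≤ ⟪z - c, u⟫_ℝ := by
  set w₁ := x₀ - c with hw₁
  set w₂ := z - c with hw₂
  set A := ⟪w₁, u⟫_ℝ with hA
  set B := ⟪w₂, u⟫_ℝ with hB
  set k := ⟪w₁, w₂⟫_ℝ with hk
  have hkabs : |k| ≤ 1 := by
    have := abs_real_inner_le_norm w₁ w₂
    rw [h1, h2, one_mul] at this
    exact this
  have hk1 : k ≤ 1 := (abs_le.mp hkabs).2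
  have hk2 : -1 ≤ k := (abs_le.mp hkabs).1
  set L : ℝ → ℝ := fun t => Real.sqrt ((1-t)^2 + t^2 + 2*t*(1-t)*k) with hLdef
  set g : ℝ → ℝ := fun t => (t + 2*(1-t)*k)/(L t + 1 - t) with hg
  have memD : ∀ y : E2, (∀ c' ∈ S, dist y c' ≤ 1) → y ∈ D := by
    intro y hy
    rw [hD]
    simp only [Set.mem_iInter, mem_closedBall]
    exact hy
  have distS : ∀ y ∈ D, ∀ c' ∈ S, dist c' y ≤ 1 := by
    intro y hy c' hc'
    rw [hD] at hy
    simp only [Set.mem_iInter, mem_closedBall] at hy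
    rw [dist_comm]; exact hy c' hc'
  -- main estimate for small positive t
  have step : ∀ t ∈ Set.Ioc (0:ℝ) (1/8), g t * A ≤ B := by
    intro t ht
    obtain ⟨ht0, ht8⟩ := ht
    have harg : (1/4 : ℝ) ≤ (1-t)^2 + t^2 + 2*t*(1-t)*k := by nlinarith
    have hL2 : (L t)^2 = (1-t)^2 + t^2 + 2*t*(1-t)*k := by
      rw [hLdef]
      exact Real.sq_sqrt (by linarith)
    have hLpos : (1/2:ℝ) ≤ L t := by
      rw [hLdef]
      rw [show (1/2:ℝ) = Real.sqrt (1/4) by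
        rw [show (1/4:ℝ) = (1/2)^2 by norm_num, Real.sqrt_sq]; norm_num]
      exact Real.sqrt_le_sqrt harg
    set vt : E2 := (1-t) • w₁ + t • w₂ with hvt
    have hvtnorm : ‖vt‖ = L t := by
      have hsq : ‖vt‖^2 = (1-t)^2 + t^2 + 2*t*(1-t)*k := by
        rw [hvt, norm_add_sq_real, norm_smul, norm_smul, real_inner_smul_left,
          real_inner_smul_right, h1, h2, Real.norm_eq_abs, Real.norm_eq_abs,
          abs_of_nonneg (by linarith : (0:ℝ) ≤ 1 - t), abs_of_nonneg ht0.le]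
        ring
      have : ‖vt‖ = Real.sqrt (‖vt‖^2) := (Real.sqrt_sq (norm_nonneg _)).symm
      rw [this, hsq]
    set W : E2 := (L t)⁻¹ • vt with hW
    have hWnorm : ‖W‖ = 1 := by
      rw [hW, norm_smul, hvtnorm, Real.norm_eq_abs, abs_of_nonneg (by positivity),
        inv_mul_cancel₀ (by linarith)]
    have hWcomb : W = ((L t)⁻¹ * (1-t)) • w₁ + ((L t)⁻¹ * t) • w₂ := by
      rw [hW, hvt, smul_add, smul_smul, smul_smul]
    have hqD : c + W ∈ D := by
      apply memD
      intro c' hc'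
      rw [dist_comm]
      exact lemL (mul_nonneg (by positivity) (by linarith)) (mul_nonneg (by positivity) ht0.le)
        hWcomb h1 h2 hWnorm (distS _ hx₀ _ hc') (distS _ hz _ hc')
    have hmin' := hmin _ hqD
    have hx0c : x₀ = c + w₁ := by rw [hw₁]; abel
    have hAB : L t * A ≤ (1-t) * A + t * B := by
      rw [hx0c] at hmin'
      rw [inner_add_left, inner_add_left, hW, real_inner_smul_left, hvt,
        inner_add_left, real_inner_smul_left, real_inner_smul_left] at hmin'
      have h3 : A ≤ (L t)⁻¹ * ((1-t) * A + t * B) := by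
        rw [hA, hB]
        linarith [hmin']
      calc L t * A ≤ L t * ((L t)⁻¹ * ((1-t)*A + t*B)) := by
            apply mul_le_mul_of_nonneg_left h3 (by linarith)
        _ = (1-t)*A + t*B := by field_simp
    -- identity: (L t - 1 + t) = t * (g t)... derive g t * A ≤ B
    have hident : (L t - (1 - t)) * (L t + (1 - t)) = t * (t + 2*(1-t)*k) := by
      have : (L t - (1-t)) * (L t + (1-t)) = (L t)^2 - (1-t)^2 := by ring
      rw [this, hL2]; ring
    have hden : (0:ℝ) < L t + 1 - t := by linarith
    have hgt : g t * t * (L t + 1 - t) = (L t - (1 - t)) * (L t + (1-t)) := by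
      rw [hg, hident]
      field_simp
    -- from hAB : t * B ≥ (L t - 1 + t) * A
    have h4 : (L t - (1 - t)) * A ≤ t * B := by linarith
    -- g t * A ≤ B
    have h5 : g t * A * (t * (L t + 1 - t)) ≤ B * (t * (L t + 1 - t)) := by
      have e1 : g t * A * (t * (L t + 1 - t)) = (L t - (1-t)) * (L t + (1-t)) * A := by
        calc g t * A * (t * (L t + 1 - t)) = (g t * t * (L t + 1 - t)) * A := by ring
          _ = (L t - (1-t)) * (L t + (1-t)) * A := by rw [hgt]
      rw [e1]
      calc (L t - (1-t)) * (L t + (1-t)) * A = ((L t - (1-t)) * A) * (L t + (1-t)) := by ring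
        _ ≤ (t * B) * (L t + (1-t)) := by
            apply mul_le_mul_of_nonneg_right h4 (by linarith)
        _ = B * (t * (L t + 1 - t)) := by ring
    have hpos : (0:ℝ) < t * (L t + 1 - t) := mul_pos ht0 hden
    exact le_of_mul_le_mul_right h5 hpos
  -- limit as t → 0⁺
  have hLt : Tendsto L (𝓝[>] (0:ℝ)) (𝓝 1) := by
    have hpoly : Continuous fun t : ℝ => (1-t)^2 + t^2 + 2*t*(1-t)*k := by
      exact (((continuous_const.sub continuous_id).pow 2).add (continuous_id.pow 2)).add
        ((((continuous_const.mul continuous_id).mul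
          (continuous_const.sub continuous_id))).mul continuous_const)
    have hc : Continuous fun t : ℝ => Real.sqrt ((1-t)^2 + t^2 + 2*t*(1-t)*k) :=
      Real.continuous_sqrt.comp hpoly
    have := hc.tendsto 0
    simp only [sub_zero, mul_zero, zero_mul, mul_one] at this
    rw [hLdef]
    refine Tendsto.mono_left ?_ nhdsWithin_le_nhds
    convert this using 2
    norm_num
  have hgt : Tendsto (fun t => g t * A) (𝓝[>] (0:ℝ)) (𝓝 (k * A)) := by
    have hnum : Tendsto (fun t : ℝ => t + 2*(1-t)*k) (𝓝[>] (0:ℝ)) (𝓝 (2*k)) := by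
      have : Continuous fun t : ℝ => t + 2*(1-t)*k :=
        continuous_id.add ((continuous_const.mul (continuous_const.sub continuous_id)).mul
          continuous_const)
      have h := this.tendsto 0
      simp only [sub_zero, mul_one, zero_add] at h
      exact h.mono_left nhdsWithin_le_nhds
    have hden : Tendsto (fun t : ℝ => L t + 1 - t) (𝓝[>] (0:ℝ)) (𝓝 2) := by
      have hid : Tendsto (fun t : ℝ => t) (𝓝[>] (0:ℝ)) (𝓝 0) :=
        tendsto_id.mono_left nhdsWithin_le_nhds
      have := (hLt.add (tendsto_const_nhds (x := (1:ℝ)))).sub hid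
      norm_num at this
      exact this
    have hgl : Tendsto g (𝓝[>] (0:ℝ)) (𝓝 k) := by
      rw [hg]
      have := hnum.div hden (by norm_num)
      simpa [Pi.div_def] using this
    exact hgl.mul tendsto_const_nhds
  have hmem : Set.Ioc (0:ℝ) (1/8) ∈ 𝓝[>] (0:ℝ) := Ioc_mem_nhdsGT (by norm_num)
  have : k * A ≤ B := by
    refine le_of_tendsto hgt ?_
    filter_upwards [hmem] with t ht using step t ht
  linarith [this, real_inner_comm w₁ w₂]

/-- KEY: the minimizer of `⟪·, u⟫` on `D` pushed by `u` gives a unit ball containing `D`. -/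
lemma exists_min_ball {S : Finset E2} (hS : S.Nonempty) {D : Set E2}
    (hD : D = ⋂ c ∈ S, closedBall c 1) (hne : D.Nonempty) {u : E2} (hu : ‖u‖ = 1) :
    ∃ x₀ ∈ D, (∀ z ∈ D, ⟪x₀, u⟫_ℝ ≤ ⟪z, u⟫_ℝ) ∧ ∀ z ∈ D, dist z (x₀ + u) ≤ 1 := by
  obtain ⟨c₀, hc₀⟩ := hS
  have hDsub : D ⊆ closedBall c₀ 1 := by
    rw [hD]; exact Set.biInter_subset_of_mem hc₀
  have hclosed : IsClosed D := by
    rw [hD]; exact isClosed_biInter fun c _ => Metric.isClosed_closedBall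
  have hbdd : Bornology.IsBounded D := (isBounded_closedBall).subset hDsub
  have hcomp : IsCompact D := Metric.isCompact_of_isClosed_isBounded hclosed hbdd
  have hcont : Continuous fun x : E2 => ⟪x, u⟫_ℝ := continuous_id.inner continuous_const
  obtain ⟨x₀, hx₀, hminOn⟩ := hcomp.exists_isMinOn hne hcont.continuousOn
  have hmin : ∀ z ∈ D, ⟪x₀, u⟫_ℝ ≤ ⟪z, u⟫_ℝ := fun z hz => hminOn hz
  refine ⟨x₀, hx₀, hmin, ?_⟩
  intro z hz
  rw [dist_ball_iff hu]
  set p := z - x₀ with hp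
  rcases eq_or_ne z x₀ with hzx | hzx
  · simp [hp, hzx]
  have hpne : p ≠ 0 := sub_ne_zero.mpr hzx
  set d := ‖p‖ with hd
  have hd0 : 0 < d := norm_pos_iff.mpr hpne
  have hdistS : ∀ y ∈ D, ∀ c' ∈ S, dist y c' ≤ 1 := by
    intro y hy c' hc'
    rw [hD] at hy
    simp only [Set.mem_iInter, mem_closedBall] at hy
    exact hy c' hc'
  have hmemD : ∀ y : E2, (∀ c' ∈ S, dist y c' ≤ 1) → y ∈ D := by
    intro y hy; rw [hD]; simp only [Set.mem_iInter, mem_closedBall]; exact hy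
  have hd2 : d ≤ 2 := by
    have h1 := hdistS z hz c₀ hc₀
    have h2 := hdistS x₀ hx₀ c₀ hc₀
    have : dist z x₀ ≤ 2 := by
      calc dist z x₀ ≤ dist z c₀ + dist c₀ x₀ := dist_triangle _ _ _
        _ ≤ 2 := by rw [dist_comm c₀ x₀]; linarith
    rwa [hd, hp, ← dist_eq_norm]
  rcases eq_or_lt_of_le hd2 with hd2e | hd2l
  -- case d = 2
  · have hmid : ∀ c' ∈ S, c' = x₀ + (2:ℝ)⁻¹ • p := by
      intro c' hc'
      have ha : ‖c' - x₀‖ ≤ 1 := by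
        rw [← dist_eq_norm, dist_comm]; exact hdistS x₀ hx₀ c' hc'
      have hb : ‖c' - z‖ ≤ 1 := by
        rw [← dist_eq_norm, dist_comm]; exact hdistS z hz c' hc'
      have hab : (c' - x₀) - (c' - z) = p := by rw [hp]; abel
      have habn : ‖(c' - x₀) - (c' - z)‖ = 2 := by rw [hab, ← hd, hd2e]
      have hsum : ‖(c' - x₀) + (c' - z)‖ = 0 := by
        have e1 := norm_sub_sq_real (c' - x₀) (c' - z)
        have e2 := norm_add_sq_real (c' - x₀) (c' - z)
        have ha2 : ‖c' - x₀‖^2 ≤ 1 := by nlinarith [norm_nonneg (c' - x₀)]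
        have hb2 : ‖c' - z‖^2 ≤ 1 := by nlinarith [norm_nonneg (c' - z)]
        have habn2 : ‖(c' - x₀) - (c' - z)‖^2 = 4 := by rw [habn]; norm_num
        have e3 : ‖(c' - x₀) + (c' - z)‖^2 ≤ 0 := by nlinarith
        nlinarith [norm_nonneg ((c' - x₀) + (c' - z))]
      have hzero : (c' - x₀) + (c' - z) = 0 := norm_eq_zero.mp hsum
      have : (2:ℝ) • c' = (2:ℝ) • (x₀ + (2:ℝ)⁻¹ • p) := by
        rw [smul_add, smul_smul]
        norm_num
        rw [two_smul, two_smul, hp]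
        have : c' + c' = x₀ + z := by
          have := hzero
          rw [sub_add_sub_comm] at this
          rw [← sub_eq_zero]
          rw [sub_eq_zero] at this ⊢
          abel_nf
          abel_nf at this
          exact this
        rw [this]; abel
      have h2ne : (2:ℝ) ≠ 0 := by norm_num
      exact smul_right_injective E2 h2ne this
    -- q = midpoint - u ∈ D
    have hqD : x₀ + (2:ℝ)⁻¹ • p - u ∈ D := by
      apply hmemD
      intro c' hc'
      rw [hmid c' hc']
      have : x₀ + (2:ℝ)⁻¹ • p - u - (x₀ + (2:ℝ)⁻¹ • p) = -u := by abel
      rw [dist_eq_norm, this, norm_neg, hu]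
    have := hmin _ hqD
    rw [inner_sub_left, inner_add_left, real_inner_smul_left] at this
    have hpu : 2 ≤ ⟪p, u⟫_ℝ := by
      have huu : ⟪u, u⟫_ℝ = 1 := by
        rw [real_inner_self_eq_norm_sq, hu]; norm_num
      nlinarith [this]
    have h4 : d^2 = 4 := by rw [hd2e]; norm_num
    rw [h4]; linarith
  -- case d < 2
  · set e : E2 := d⁻¹ • p with he
    have hee : ‖e‖ = 1 := by
      rw [he, norm_smul, Real.norm_eq_abs, abs_of_pos (inv_pos.mpr hd0), ← hd,
        inv_mul_cancel₀ (ne_of_gt hd0)]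
    have hpde : p = d • e := by
      rw [he, smul_smul, mul_inv_cancel₀ (ne_of_gt hd0), one_smul]
    clear_value e
    set n : E2 := pt (-(e 1)) (e 0) with hn
    have hnn : ‖n‖ = 1 := by rw [hn]; exact perp_norm hee
    have hen : ⟪e, n⟫_ℝ = 0 := by rw [hn]; exact perp_inner e
    have hαβ : ⟪e, u⟫_ℝ^2 + ⟪n, u⟫_ℝ^2 = 1 := by rw [hn]; exact perp_complete hee hu
    clear_value n
    set α := ⟪e, u⟫_ℝ with hα
    set β := ⟪n, u⟫_ℝ with hβ
    clear_value α β
    set s := Real.sqrt (1 - d^2/4) with hs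
    have hs2 : s^2 = 1 - d^2/4 := by rw [hs]; exact Real.sq_sqrt (aux_pos hd0 hd2l).le
    have hspos : 0 < s := by rw [hs]; exact Real.sqrt_pos.mpr (aux_pos hd0 hd2l)
    clear_value s
    have hde : d • e = (d/2) • e + (d/2) • e := by rw [← add_smul]; norm_num
    set v₁ : E2 := (d/2) • e + s • n with hv₁
    set v₂ : E2 := (d/2) • e - s • n with hv₂
    have hv₂' : v₂ = (d/2) • e + (-s) • n := by rw [hv₂, neg_smul]; abel
    have hnv₁ : ‖v₁‖ = 1 := by
      apply norm_one_of_sq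
      rw [← real_inner_self_eq_norm_sq, hv₁, inner_comb hee hnn hen]
      linear_combination hs2
    have hnv₂ : ‖v₂‖ = 1 := by
      apply norm_one_of_sq
      rw [← real_inner_self_eq_norm_sq, hv₂', inner_comb hee hnn hen]
      linear_combination hs2
    clear_value v₁ v₂
    have hzp : z = x₀ + p := by rw [hp]; abel
    have hc₁ : x₀ - (x₀ + v₁) = -v₁ := by abel
    have hz₁ : z - (x₀ + v₁) = v₂ := by rw [hzp, hpde, hde, hv₁, hv₂]; abel
    have hc₂ : x₀ - (x₀ + v₂) = -v₂ := by abel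
    have hz₂ : z - (x₀ + v₂) = v₁ := by rw [hzp, hpde, hde, hv₁, hv₂]; abel
    have st₁ := circle_step hD hx₀ hmin hz (c := x₀ + v₁)
      (by rw [hc₁, norm_neg, hnv₁]) (by rw [hz₁, hnv₂])
    have st₂ := circle_step hD hx₀ hmin hz (c := x₀ + v₂)
      (by rw [hc₂, norm_neg, hnv₂]) (by rw [hz₂, hnv₁])
    rw [hc₁, hz₁] at st₁
    rw [hc₂, hz₂] at st₂
    have ev₁u : ⟪v₁, u⟫_ℝ = (d/2) * α + s * β := by
      rw [hv₁, inner_add_left, real_inner_smul_left, real_inner_smul_left, ← hα, ← hβ]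
    have ev₂u : ⟪v₂, u⟫_ℝ = (d/2) * α - s * β := by
      rw [hv₂', inner_add_left, real_inner_smul_left, real_inner_smul_left, ← hα, ← hβ]
      ring
    have ev₁₂ : ⟪v₁, v₂⟫_ℝ = d^2/4 - s^2 := by
      rw [hv₁, hv₂', inner_comb hee hnn hen]; ring
    have ev₂₁ : ⟪v₂, v₁⟫_ℝ = d^2/4 - s^2 := by rw [real_inner_comm]; exact ev₁₂
    rw [inner_neg_left, inner_neg_left, ev₁u, ev₂u, ev₁₂] at st₁
    rw [inner_neg_left, inner_neg_left, ev₂u, ev₁u, ev₂₁] at st₂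
    have hαd : d/2 ≤ α := final_algebra hd0 hd2l hs2 hspos hαβ st₁ st₂
    have hpu : ⟪p, u⟫_ℝ = d * α := by rw [hpde, real_inner_smul_left, ← hα]
    rw [hpu]
    exact half_le hd0 hαd

lemma dirWidth_le_diam (C : Set E2) (hb : Bornology.IsBounded C) {u : E2} (hu : ‖u‖ = 1) :
    dirWidth C u ≤ Metric.diam C := by
  apply Real.sSup_le
  · rintro w ⟨x, hx, y, hy, rfl⟩
    calc ⟪x - y, u⟫_ℝ ≤ ‖x - y‖ * ‖u‖ := real_inner_le_norm _ _
      _ = dist x y := by rw [hu, mul_one, dist_eq_norm]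
      _ ≤ Metric.diam C := dist_le_diam_of_mem hb hx hy
  · exact diam_nonneg

lemma unit_exists : ∃ u : E2, ‖u‖ = 1 :=
  ⟨EuclideanSpace.single (0 : Fin 2) (1:ℝ), by simp [EuclideanSpace.norm_single]⟩

lemma diam_eq_sSup (C : Set E2) (hC : C.Nonempty) (hb : Bornology.IsBounded C) :
    Metric.diam C = sSup {w : ℝ | ∃ u : E2, ‖u‖ = 1 ∧ w = dirWidth C u} := by
  set B := {w : ℝ | ∃ u : E2, ‖u‖ = 1 ∧ w = dirWidth C u} with hB
  obtain ⟨u₀, hu₀⟩ := unit_exists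
  have hBne : B.Nonempty := ⟨dirWidth C u₀, u₀, hu₀, rfl⟩
  have hBbdd : BddAbove B := by
    refine ⟨Metric.diam C, ?_⟩
    rintro w ⟨u, hu, rfl⟩
    exact dirWidth_le_diam C hb hu
  have hge : sSup B ≤ Metric.diam C := by
    apply csSup_le hBne
    rintro w ⟨u, hu, rfl⟩
    exact dirWidth_le_diam C hb hu
  have hinnerBdd : ∀ u : E2, ‖u‖ = 1 → BddAbove {w : ℝ | ∃ x ∈ C, ∃ y ∈ C, w = ⟪x - y, u⟫_ℝ} := by
    intro u hu
    refine ⟨Metric.diam C, ?_⟩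
    rintro w ⟨x, hx, y, hy, rfl⟩
    calc ⟪x - y, u⟫_ℝ ≤ ‖x - y‖ * ‖u‖ := real_inner_le_norm _ _
      _ = dist x y := by rw [hu, mul_one, dist_eq_norm]
      _ ≤ Metric.diam C := dist_le_diam_of_mem hb hx hy
  have hle : Metric.diam C ≤ sSup B := by
    obtain ⟨x_, hx_⟩ := hC
    have h0 : (0:ℝ) ≤ dirWidth C u₀ := by
      apply le_csSup (hinnerBdd u₀ hu₀)
      exact ⟨x_, hx_, x_, hx_, by simp⟩
    have h0' : (0:ℝ) ≤ sSup B := le_trans h0 (le_csSup hBbdd ⟨u₀, hu₀, rfl⟩)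
    apply Metric.diam_le_of_forall_dist_le h0'
    intro x hx y hy
    rcases eq_or_ne x y with h | h
    · rw [h, dist_self]; exact h0'
    · set u : E2 := ‖x - y‖⁻¹ • (x - y) with hu
      have hxy : x - y ≠ 0 := sub_ne_zero.mpr h
      have hnxy : (0:ℝ) < ‖x - y‖ := norm_pos_iff.mpr hxy
      have hun : ‖u‖ = 1 := by
        rw [hu, norm_smul, Real.norm_eq_abs, abs_of_pos (inv_pos.mpr hnxy),
          inv_mul_cancel₀ (ne_of_gt hnxy)]
      have hdist : dist x y = ⟪x - y, u⟫_ℝ := by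
        rw [hu, real_inner_smul_right, real_inner_self_eq_norm_sq, dist_eq_norm]
        field_simp
      calc dist x y = ⟪x - y, u⟫_ℝ := hdist
        _ ≤ dirWidth C u := le_csSup (hinnerBdd u hun) ⟨x, hx, y, hy, rfl⟩
        _ ≤ sSup B := le_csSup hBbdd ⟨u, hun, rfl⟩
  linarith

lemma sInf_two_sub (B : Set ℝ) (hne : B.Nonempty) (hb : BddAbove B) :
    sInf ((fun b => 2 - b) '' B) = 2 - sSup B := by
  have hlub := isLUB_csSup hne hb
  have hglb : IsGLB ((fun b => 2 - b) '' B) (2 - sSup B) := by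
    constructor
    · rintro w ⟨b, hbB, rfl⟩
      have : b ≤ sSup B := hlub.1 hbB
      simp only []
      linarith
    · intro l hl
      have : ∀ b ∈ B, b ≤ 2 - l := by
        intro b hbB
        have := hl ⟨b, hbB, rfl⟩
        simp only [] at this
        linarith
      have := hlub.2 this
      linarith
  exact hglb.csInf_eq (hne.image _)

section main
variable {S : Finset E2} (hS : S.Nonempty) {D : Set E2}
  (hD : D = ⋂ c ∈ S, closedBall c 1) (hne : D.Nonempty)

include hS hD hne in
lemma width_star {u : E2} (hu : ‖u‖ = 1) :
    dirWidth D u = sSup {w : ℝ | ∃ x ∈ D, ∃ y ∈ D, w = ⟪x - y, u⟫_ℝ} ∧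
    dirWidth D u + dirWidth (dualDP D) u = 2 := by
  refine ⟨rfl, ?_⟩
  obtain ⟨x₀, hx₀D, hx₀min, hx₀ball⟩ := exists_min_ball hS hD hne hu
  have hu' : ‖-u‖ = 1 := by rw [norm_neg]; exact hu
  obtain ⟨x₁, hx₁D, hx₁min, hx₁ball⟩ := exists_min_ball hS hD hne hu'
  have hx₁max : ∀ z ∈ D, ⟪z, u⟫_ℝ ≤ ⟪x₁, u⟫_ℝ := by
    intro z hz
    have := hx₁min z hz
    rw [inner_neg_right, inner_neg_right] at this
    linarith
  have hduB : x₀ + u ∈ dualDP D := fun x hx => hx₀ball x hx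
  have hduB' : x₁ - u ∈ dualDP D := by
    have : ∀ z ∈ D, dist z (x₁ + (-u)) ≤ 1 := hx₁ball
    intro x hx
    have h := this x hx
    rwa [show x₁ + (-u) = x₁ - u by abel] at h
  set W := ⟪x₁ - x₀, u⟫_ℝ with hW
  have hDW : IsGreatest {w : ℝ | ∃ x ∈ D, ∃ y ∈ D, w = ⟪x - y, u⟫_ℝ} W :=
    ⟨⟨x₁, hx₁D, x₀, hx₀D, rfl⟩, by
      rintro w ⟨x, hx, y, hy, rfl⟩
      rw [inner_sub_left]
      rw [hW, inner_sub_left]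
      have h1 := hx₁max x hx
      have h2 := hx₀min y hy
      linarith⟩
  have hD'W : IsGreatest {w : ℝ | ∃ x ∈ dualDP D, ∃ y ∈ dualDP D, w = ⟪x - y, u⟫_ℝ} (2 - W) :=
    ⟨⟨x₀ + u, hduB, x₁ - u, hduB', by
      have huu : ⟪u, u⟫_ℝ = 1 := by
        rw [real_inner_self_eq_norm_sq, hu]; norm_num
      have hvec : (x₀ + u) - (x₁ - u) = (x₀ - x₁) + u + u := by abel
      rw [hvec, inner_add_left, inner_add_left, inner_sub_left, huu, hW, inner_sub_left]
      ring⟩, by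
      rintro w ⟨y₁, hy₁, y₂, hy₂, rfl⟩
      have hvec : y₁ - y₂ = (y₁ - x₀) + (x₀ - x₁) + (x₁ - y₂) := by abel
      rw [hvec, inner_add_left, inner_add_left]
      have b1 : ⟪y₁ - x₀, u⟫_ℝ ≤ 1 := by
        calc ⟪y₁ - x₀, u⟫_ℝ ≤ ‖y₁ - x₀‖ * ‖u‖ := real_inner_le_norm _ _
          _ = dist x₀ y₁ := by rw [hu, mul_one, dist_eq_norm, norm_sub_rev]
          _ ≤ 1 := hy₁ x₀ hx₀D
      have b2 : ⟪x₁ - y₂, u⟫_ℝ ≤ 1 := by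
        calc ⟪x₁ - y₂, u⟫_ℝ ≤ ‖x₁ - y₂‖ * ‖u‖ := real_inner_le_norm _ _
          _ = dist x₁ y₂ := by rw [hu, mul_one, dist_eq_norm]
          _ ≤ 1 := hy₂ x₁ hx₁D
      have b3 : ⟪x₀ - x₁, u⟫_ℝ = -W := by rw [hW, inner_sub_left, inner_sub_left]; ring
      rw [b3]
      linarith⟩
  have e1 : dirWidth D u = W := hDW.csSup_eq
  have e2 : dirWidth (dualDP D) u = 2 - W := hD'W.csSup_eq
  rw [e1, e2]
  ring
end main

/-- Corollary 1 of the paper: for every disk-polygon `D`,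
`w(D) + diam(D*) = 2` and `w(D*) + diam(D) = 2`. -/
theorem minWidth_add_diam_dual (S : Finset E2) (hS : S.Nonempty) (D : Set E2)
    (hD : D = ⋂ c ∈ S, closedBall c 1) (hint : (interior D).Nonempty) :
    minWidth D + Metric.diam (dualDP D) = 2 ∧
    minWidth (dualDP D) + Metric.diam D = 2 := by
  obtain ⟨x_, hx_⟩ := hint
  have hne : D.Nonempty := ⟨x_, interior_subset hx_⟩
  obtain ⟨xD, hxD⟩ := hne
  obtain ⟨c₀, hc₀⟩ := hS
  have hSne : S.Nonempty := ⟨c₀, hc₀⟩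
  have hmemD : ∀ y ∈ D, ∀ c' ∈ S, dist y c' ≤ 1 := by
    intro y hy c' hc'
    rw [hD] at hy
    simp only [Set.mem_iInter, mem_closedBall] at hy
    exact hy c' hc'
  have hDbdd : Bornology.IsBounded D := by
    apply (isBounded_closedBall (x := c₀) (r := 1)).subset
    intro y hy
    rw [mem_closedBall]
    exact hmemD y hy c₀ hc₀
  have hdual_ne : (dualDP D).Nonempty := ⟨c₀, fun x hx => hmemD x hx c₀ hc₀⟩
  have hdual_bdd : Bornology.IsBounded (dualDP D) := by
    apply (isBounded_closedBall (x := xD) (r := 1)).subset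
    intro y hy
    rw [mem_closedBall, dist_comm]
    exact hy xD hxD
  set A := {w : ℝ | ∃ u : E2, ‖u‖ = 1 ∧ w = dirWidth D u} with hA
  set B := {w : ℝ | ∃ u : E2, ‖u‖ = 1 ∧ w = dirWidth (dualDP D) u} with hB
  obtain ⟨u₀, hu₀⟩ := unit_exists
  have hAne : A.Nonempty := ⟨dirWidth D u₀, u₀, hu₀, rfl⟩
  have hBne : B.Nonempty := ⟨dirWidth (dualDP D) u₀, u₀, hu₀, rfl⟩
  have hAbdd : BddAbove A := by
    refine ⟨Metric.diam D, ?_⟩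
    rintro w ⟨u, hu, rfl⟩
    exact dirWidth_le_diam D hDbdd hu
  have hBbdd : BddAbove B := by
    refine ⟨Metric.diam (dualDP D), ?_⟩
    rintro w ⟨u, hu, rfl⟩
    exact dirWidth_le_diam _ hdual_bdd hu
  have hstar : ∀ u : E2, ‖u‖ = 1 → dirWidth D u + dirWidth (dualDP D) u = 2 := by
    intro u hu
    exact (width_star hSne hD ⟨xD, hxD⟩ hu).2
  have hAB : A = (fun b => 2 - b) '' B := by
    ext w
    constructor
    · rintro ⟨u, hu, rfl⟩
      refine ⟨dirWidth (dualDP D) u, ⟨u, hu, rfl⟩, ?_⟩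
      show 2 - dirWidth (dualDP D) u = dirWidth D u
      linarith [hstar u hu]
    · rintro ⟨b, ⟨u, hu, rfl⟩, rfl⟩
      refine ⟨u, hu, ?_⟩
      show (fun b => 2 - b) (dirWidth (dualDP D) u) = dirWidth D u
      show 2 - dirWidth (dualDP D) u = dirWidth D u
      linarith [hstar u hu]
  have hBA : B = (fun b => 2 - b) '' A := by
    ext w
    constructor
    · rintro ⟨u, hu, rfl⟩
      refine ⟨dirWidth D u, ⟨u, hu, rfl⟩, ?_⟩
      show 2 - dirWidth D u = dirWidth (dualDP D) u
      linarith [hstar u hu]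
    · rintro ⟨b, ⟨u, hu, rfl⟩, rfl⟩
      refine ⟨u, hu, ?_⟩
      show (fun b => 2 - b) (dirWidth D u) = dirWidth (dualDP D) u
      show 2 - dirWidth D u = dirWidth (dualDP D) u
      linarith [hstar u hu]
  have hdiam_dual : Metric.diam (dualDP D) = sSup B := diam_eq_sSup _ hdual_ne hdual_bdd
  have hdiam_D : Metric.diam D = sSup A := diam_eq_sSup _ ⟨xD, hxD⟩ hDbdd
  have hmw_D : minWidth D = 2 - sSup B := by
    rw [minWidth, ← hA, hAB, sInf_two_sub B hBne hBbdd]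
  have hmw_dual : minWidth (dualDP D) = 2 - sSup A := by
    rw [minWidth, ← hB, hBA, sInf_two_sub A hAne hAbdd]
  constructor
  · rw [hmw_D, hdiam_dual]; ring
  · rw [hmw_dual, hdiam_D]; ring
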